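/- arXiv:1203.1482 — 2 statements merged into one kernel-verified Lean document; each statement's English description precedes it below -/
import Mathlib

section
/- Let n and k be integers with 1 ≤ k < n/2. Then for all real x one has the polynomial identity 2(x)_k(x)_{n−k} − (x−1)_k(x+1)_{n−k} − (x−1)_{n−k}(x+1)_k = (x)_{k−1} (x+1)_{n−k−2} (−A_k x + B_k), where A_k = n(n−1) − 4k(n−k) and B_k = n(n−1) − 2k(n−k). -/
/-- Rising factorial (Pochhammer symbol): `asc x k = x (x+1) ⋯ (x+k-1)`. -/
noncomputable def asc (x : ℝ) (k : ℕ) : ℝ := (ascPochhammer ℝ k).eval x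

lemma asc_succ (x : ℝ) (k : ℕ) : asc x (k + 1) = asc x k * (x + k) := by
  simp [asc, ascPochhammer_succ_right]

lemma asc_left (x : ℝ) (k : ℕ) : asc x (k + 1) = x * asc (x + 1) k := by
  simp [asc, ascPochhammer_succ_left, Polynomial.eval_comp]

theorem Phi_k_identity (n k : ℕ) (hk : 1 ≤ k) (hkn : 2 * k < n) (x : ℝ) :
    2 * asc x k * asc x (n - k) - asc (x - 1) k * asc (x + 1) (n - k)
      - asc (x - 1) (n - k) * asc (x + 1) k =
    asc x (k - 1) * asc (x + 1) (n - k - 2) *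
      (-((n * (n - 1) : ℝ) - 4 * k * (n - k : ℕ)) * x + ((n * (n - 1) : ℝ) - 2 * k * (n - k : ℕ))) := by
  obtain ⟨a, rfl⟩ : ∃ a, k = a + 1 := ⟨k - 1, by omega⟩
  obtain ⟨m, rfl⟩ : ∃ m, n = a + m + 3 := ⟨n - a - 3, by omega⟩
  rw [show a + m + 3 - (a + 1) = m + 2 from by omega, show m + 2 - 2 = m from rfl,
    show a + 1 - 1 = a from rfl]
  have hx : x - 1 + 1 = x := by ring
  have h : x * asc (x + 1) (a + 1) = asc x a * (x + a) * (x + a + 1) := by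
    rw [← asc_left x (a + 1), asc_succ x (a + 1), asc_succ x a]
    push_cast; ring
  rw [asc_succ x a, show m + 2 = m + 1 + 1 from rfl, asc_left x (m + 1),
    asc_left (x - 1) a, asc_succ (x + 1) (m + 1), asc_left (x - 1) (m + 1),
    asc_succ (x + 1) m, hx, asc_left x m]
  push_cast
  linear_combination (-(x - 1) * asc (x + 1) m) * h
end

section
/- Let n ≥ 3 and let f_0,…,f_n be real numbers. For each m = 1,2,…,n−2, the coefficient p_n(m) of x^m in the polynomial P_n(x) satisfies p_n(m) = −n(n−1) S^{n−1}_{m+1} f_0 f_n + Σ_{1 ≤ k ≤ n/2} f_k f_{n−k} binom(n,k) Σ_{i=0}^m S^{k−1}_i ( B_k S^{n−k−1}_{m−i+1} − A_k S^{n−k−1}_{m−i} ), where A_k = n(n−1) − 4k(n−k) and B_k = n(n−1) − 2k(n−k) for k < n/2, and, when n is even, A_{n/2} = −n/2 and B_{n/2} = n(n−2)/4. -/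
open Polynomial

/-- The polynomial `P_n(x) = Σ_{k=0}^n f_k f_{n-k} C(n,k) [(x)_k (x)_{n-k} - (x+1)_k (x-1)_{n-k}]`,
where `(x)_k` is the rising factorial. -/
noncomputable def Ppoly (n : ℕ) (f : ℕ → ℝ) : Polynomial ℝ :=
  ∑ k ∈ Finset.range (n + 1),
    C (f k * f (n - k) * (n.choose k : ℝ)) *
      (ascPochhammer ℝ k * ascPochhammer ℝ (n - k) -
        (ascPochhammer ℝ k).comp (X + 1) * (ascPochhammer ℝ (n - k)).comp (X - 1))

/-- Unsigned Stirling number of the first kind `S^p_q`: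
the coefficient of `x^q` in the rising factorial `(x)_p`. -/
noncomputable def Stir (p q : ℕ) : ℝ := (ascPochhammer ℝ p).coeff q

/-- `A_k = n(n-1) - 4k(n-k)` for `k < n/2`, and `A_{n/2} = -n/2` for even `n`. -/
noncomputable def Acoef (n k : ℕ) : ℝ :=
  if 2 * k = n then -(n : ℝ) / 2 else (n : ℝ) * ((n : ℝ) - 1) - 4 * (k : ℝ) * ((n : ℝ) - (k : ℝ))

/-- `B_k = n(n-1) - 2k(n-k)` for `k < n/2`, and `B_{n/2} = n(n-2)/4` for even `n`. -/
noncomputable def Bcoef (n k : ℕ) : ℝ :=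
  if 2 * k = n then (n : ℝ) * ((n : ℝ) - 2) / 4
  else (n : ℝ) * ((n : ℝ) - 1) - 2 * (k : ℝ) * ((n : ℝ) - (k : ℝ))

/-! ### Auxiliary definitions and lemmas -/

/-- The `k`-th bracket with `a` playing the role of `k` and `b` the role of `n-k`. -/
noncomputable def Tp (a b : ℕ) : Polynomial ℝ :=
  ascPochhammer ℝ a * ascPochhammer ℝ b -
    (ascPochhammer ℝ a).comp (X + 1) * (ascPochhammer ℝ b).comp (X - 1)

/-- Summand of `Ppoly`. -/
noncomputable def gterm (n : ℕ) (f : ℕ → ℝ) (k : ℕ) : Polynomial ℝ :=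
  C (f k * f (n - k) * (n.choose k : ℝ)) * Tp k (n - k)

/-- Target summand. -/
noncomputable def tterm (n : ℕ) (f : ℕ → ℝ) (k : ℕ) : Polynomial ℝ :=
  C (f k * f (n - k) * (n.choose k : ℝ)) *
    (ascPochhammer ℝ (k - 1) * ascPochhammer ℝ (n - k - 1) *
      (C (Bcoef n k) - C (Acoef n k) * X))

lemma asc_comp_sub (j : ℕ) :
    (ascPochhammer ℝ (j + 1)).comp (X - 1) = (X - 1) * ascPochhammer ℝ j := by
  rw [ascPochhammer_succ_left, mul_comp, X_comp, Polynomial.comp_assoc]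
  simp

lemma X_mul_asc_comp_add (j : ℕ) :
    X * (ascPochhammer ℝ j).comp (X + 1) = ascPochhammer ℝ j * (X + (j : ℝ[X])) := by
  rw [← ascPochhammer_succ_left, ascPochhammer_succ_right]

lemma Xterm (a b : ℕ) :
    X * Tp (a + 1) (b + 1) =
      ascPochhammer ℝ (a + 1) * ascPochhammer ℝ b *
        (((b : ℝ[X]) - (a : ℝ[X])) * X + ((a : ℝ[X]) + 1)) := by
  have h1 := X_mul_asc_comp_add (a + 1)
  have h2 := asc_comp_sub b
  have h3 := ascPochhammer_succ_right ℝ b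
  unfold Tp
  push_cast at h1
  linear_combination (-(ascPochhammer ℝ (b + 1)).comp (X - 1)) * h1 +
    (-(ascPochhammer ℝ (a + 1) * (X + (a : ℝ[X]) + 1))) * h2 +
    (X * ascPochhammer ℝ (a + 1)) * h3

lemma Xpair (a b : ℕ) :
    X * (Tp (a + 1) (b + 1) + Tp (b + 1) (a + 1)) =
      ascPochhammer ℝ a * ascPochhammer ℝ b *
        (C ((a : ℝ) ^ 2 + (b : ℝ) ^ 2 + a + b) -
          C (((a : ℝ) - b) ^ 2 - a - b - 2) * X) := by
  have h1 := Xterm a b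
  have h2 := Xterm b a
  have h3 := ascPochhammer_succ_right ℝ a
  have h4 := ascPochhammer_succ_right ℝ b
  simp only [map_add, map_sub, map_pow, map_mul, map_one, map_ofNat, Polynomial.C_eq_natCast]
  linear_combination h1 + h2 +
    (ascPochhammer ℝ b * (((b : ℝ[X]) - a) * X + a + 1)) * h3 +
    (ascPochhammer ℝ a * (((a : ℝ[X]) - b) * X + b + 1)) * h4

lemma Xdiag (a : ℕ) :
    X * Tp (a + 1) (a + 1) =
      ascPochhammer ℝ a * ascPochhammer ℝ a *
        (C ((a : ℝ) ^ 2 + a) - C (-((a : ℝ) + 1)) * X) := by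
  have h1 := Xterm a a
  have h3 := ascPochhammer_succ_right ℝ a
  simp only [map_add, map_sub, map_pow, map_mul, map_one, map_neg, Polynomial.C_eq_natCast]
  linear_combination h1 + (ascPochhammer ℝ a * ((a : ℝ[X]) + 1)) * h3

lemma Xends (c : ℕ) :
    X * (Tp 0 (c + 1) + Tp (c + 1) 0) = C (-(((c : ℝ) + 1) * c)) * ascPochhammer ℝ c := by
  have h1 := X_mul_asc_comp_add (c + 1)
  have h2 := asc_comp_sub c
  have h3 := ascPochhammer_succ_right ℝ c
  simp only [Tp, ascPochhammer_zero, one_mul, mul_one, one_comp, map_neg, map_mul, map_add,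
    map_one, Polynomial.C_eq_natCast]
  push_cast at h1
  linear_combination (-1 : ℝ[X]) * h1 + (-X) * h2 + (X - (c : ℝ[X]) - 1) * h3

lemma pair_step (n : ℕ) (f : ℕ → ℝ) (k : ℕ) (hk1 : 1 ≤ k) (hk2 : 2 * k < n) :
    X * (gterm n f k + gterm n f (n - k)) = tterm n f k := by
  obtain ⟨a, rfl⟩ : ∃ a, k = a + 1 := ⟨k - 1, by omega⟩
  obtain ⟨b, rfl⟩ : ∃ b, n = a + b + 2 := ⟨n - a - 2, by omega⟩
  have e1 : a + b + 2 - (a + 1) = b + 1 := by omega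
  have e2 : a + b + 2 - (b + 1) = a + 1 := by omega
  have e3 : a + 1 - 1 = a := by omega
  have e4 : b + 1 - 1 = b := by omega
  have echoose : (a + b + 2).choose (b + 1) = (a + b + 2).choose (a + 1) := by
    rw [← e1, Nat.choose_symm (by omega)]
  have hB : Bcoef (a + b + 2) (a + 1) = (a : ℝ) ^ 2 + (b : ℝ) ^ 2 + a + b := by
    rw [Bcoef, if_neg (by omega)]; push_cast; ring
  have hA : Acoef (a + b + 2) (a + 1) = ((a : ℝ) - b) ^ 2 - a - b - 2 := by
    rw [Acoef, if_neg (by omega)]; push_cast; ring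
  simp only [gterm, tterm, e1, e2, e3, e4, echoose, hA, hB]
  have hc : f (b + 1) * f (a + 1) = f (a + 1) * f (b + 1) := mul_comm _ _
  rw [hc]
  linear_combination C (f (a + 1) * f (b + 1) * ((a + b + 2).choose (a + 1) : ℝ)) * Xpair a b

lemma diag_step (n : ℕ) (f : ℕ → ℝ) (k : ℕ) (hk1 : 1 ≤ k) (hk2 : 2 * k = n) :
    X * gterm n f k = tterm n f k := by
  obtain ⟨a, rfl⟩ : ∃ a, k = a + 1 := ⟨k - 1, by omega⟩
  obtain rfl : n = 2 * a + 2 := by omega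
  have e1 : 2 * a + 2 - (a + 1) = a + 1 := by omega
  have e3 : a + 1 - 1 = a := by omega
  have hB : Bcoef (2 * a + 2) (a + 1) = (a : ℝ) ^ 2 + a := by
    rw [Bcoef, if_pos (by omega)]; push_cast; ring
  have hA : Acoef (2 * a + 2) (a + 1) = -((a : ℝ) + 1) := by
    rw [Acoef, if_pos (by omega)]; push_cast; ring
  simp only [gterm, tterm, e1, e3, hA, hB]
  linear_combination C (f (a + 1) * f (a + 1) * ((2 * a + 2).choose (a + 1) : ℝ)) * Xdiag a

lemma grand (n : ℕ) (hn : 3 ≤ n) (f : ℕ → ℝ) :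
    X * Ppoly n f =
      C (-((n : ℝ) * ((n : ℝ) - 1)) * (f 0 * f n)) * ascPochhammer ℝ (n - 1) +
        ∑ k ∈ Finset.Icc 1 (n / 2), tterm n f k := by
  have hP : Ppoly n f = ∑ k ∈ Finset.range (n + 1), gterm n f k := rfl
  have hsplit : Finset.range (n + 1) = insert 0 (insert n (Finset.Ioc 0 (n - 1))) := by
    ext x
    simp only [Finset.mem_range, Finset.mem_insert, Finset.mem_Ioc]
    omega
  have hnot0 : (0 : ℕ) ∉ insert n (Finset.Ioc 0 (n - 1)) := by
    simp only [Finset.mem_insert, Finset.mem_Ioc]; omega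
  have hnotn : n ∉ Finset.Ioc 0 (n - 1) := by
    simp only [Finset.mem_Ioc]; omega
  rw [hP, hsplit, Finset.sum_insert hnot0, Finset.sum_insert hnotn]
  have hmid : ∑ k ∈ Finset.Ioc 0 (n - 1), gterm n f k
      = ∑ k ∈ Finset.Ioc 0 (n / 2), gterm n f k
        + ∑ j ∈ Finset.Ioc 0 (n - 1 - n / 2), gterm n f (n - j) := by
    rw [← Finset.sum_Ioc_consecutive (gterm n f) (Nat.zero_le (n / 2)) (show n / 2 ≤ n - 1 by omega)]
    congr 1
    refine Finset.sum_nbij' (fun k => n - k) (fun j => n - j) ?_ ?_ ?_ ?_ ?_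
    · intro a ha; simp only [Finset.mem_Ioc] at *; omega
    · intro a ha; simp only [Finset.mem_Ioc] at *; omega
    · intro a ha; simp only [Finset.mem_Ioc] at ha; omega
    · intro a ha; simp only [Finset.mem_Ioc] at ha; omega
    · intro a ha
      simp only [Finset.mem_Ioc] at ha
      rw [Nat.sub_sub_self (by omega : a ≤ n)]
  have hends : X * (gterm n f 0 + gterm n f n)
      = C (-((n : ℝ) * ((n : ℝ) - 1)) * (f 0 * f n)) * ascPochhammer ℝ (n - 1) := by
    obtain ⟨c, rfl⟩ : ∃ c, n = c + 1 := ⟨n - 1, by omega⟩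
    have h := Xends c
    simp only [gterm, Nat.sub_zero, Nat.sub_self, Nat.choose_zero_right, Nat.choose_self,
      Nat.cast_one, mul_one, Nat.add_sub_cancel] at *
    simp only [map_neg, map_mul, map_add, map_one, map_sub, Polynomial.C_eq_natCast] at h ⊢
    push_cast at h ⊢
    linear_combination (C (f 0) * C (f (c + 1))) * h
  have hIcc : Finset.Icc 1 (n / 2) = Finset.Ioc 0 (n / 2) := by
    ext x; simp only [Finset.mem_Icc, Finset.mem_Ioc]; omega
  rw [hmid, hIcc]
  by_cases hpar : 2 * (n / 2) = n
  · -- n even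
    have hq1 : 1 ≤ n / 2 := by omega
    have htop : n - 1 - n / 2 = n / 2 - 1 := by omega
    have hq : n / 2 = (n / 2 - 1) + 1 := by omega
    have hpeelg : ∑ k ∈ Finset.Ioc 0 (n / 2), gterm n f k
        = ∑ k ∈ Finset.Ioc 0 (n / 2 - 1), gterm n f k + gterm n f (n / 2) := by
      rw [hq, Finset.sum_Ioc_succ_top (Nat.zero_le _), ← hq]
    have hpeelt : ∑ k ∈ Finset.Ioc 0 (n / 2), tterm n f k
        = ∑ k ∈ Finset.Ioc 0 (n / 2 - 1), tterm n f k + tterm n f (n / 2) := by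
      rw [hq, Finset.sum_Ioc_succ_top (Nat.zero_le _), ← hq]
    have hmain : X * (∑ k ∈ Finset.Ioc 0 (n / 2 - 1), gterm n f k
        + ∑ j ∈ Finset.Ioc 0 (n / 2 - 1), gterm n f (n - j))
        = ∑ k ∈ Finset.Ioc 0 (n / 2 - 1), tterm n f k := by
      rw [← Finset.sum_add_distrib, Finset.mul_sum]
      refine Finset.sum_congr rfl fun k hk => ?_
      simp only [Finset.mem_Ioc] at hk
      exact pair_step n f k (by omega) (by omega)
    have hdiag : X * gterm n f (n / 2) = tterm n f (n / 2) :=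
      diag_step n f (n / 2) (by omega) (by omega)
    rw [htop, hpeelg, hpeelt]
    linear_combination hends + hmain + hdiag
  · -- n odd
    have htop : n - 1 - n / 2 = n / 2 := by omega
    have hmain : X * (∑ k ∈ Finset.Ioc 0 (n / 2), gterm n f k
        + ∑ j ∈ Finset.Ioc 0 (n / 2), gterm n f (n - j))
        = ∑ k ∈ Finset.Ioc 0 (n / 2), tterm n f k := by
      rw [← Finset.sum_add_distrib, Finset.mul_sum]
      refine Finset.sum_congr rfl fun k hk => ?_
      simp only [Finset.mem_Ioc] at hk
      exact pair_step n f k (by omega) (by omega)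
    rw [htop]
    linear_combination hends + hmain

lemma Stir_zero_of_pos (p : ℕ) (hp : 1 ≤ p) : Stir p 0 = 0 := by
  rw [Stir, Polynomial.coeff_zero_eq_eval_zero, ascPochhammer_eval_zero, if_neg (by omega)]

theorem P_coeff_formula
    (n : ℕ) (hn : 3 ≤ n) (f : ℕ → ℝ) :
    ∀ m, 1 ≤ m → m ≤ n - 2 →
      (Ppoly n f).coeff m =
        -((n : ℝ) * ((n : ℝ) - 1)) * Stir (n - 1) (m + 1) * (f 0 * f n) +
          ∑ k ∈ Finset.Icc 1 (n / 2),
            f k * f (n - k) * (n.choose k : ℝ) *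
              ∑ i ∈ Finset.range (m + 1),
                Stir (k - 1) i *
                  (Bcoef n k * Stir (n - k - 1) (m - i + 1) -
                    Acoef n k * Stir (n - k - 1) (m - i)) := by
  intro m hm1 hm2
  have hcoeff : (Ppoly n f).coeff m = (X * Ppoly n f).coeff (m + 1) :=
    (Polynomial.coeff_X_mul (Ppoly n f) m).symm
  rw [hcoeff, grand n hn f, Polynomial.coeff_add, Polynomial.coeff_C_mul,
    Polynomial.finset_sum_coeff]
  congr 1
  · simp only [Stir]; ring
  · refine Finset.sum_congr rfl fun k hk => ?_
    simp only [Finset.mem_Icc] at hk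
    have hnk1 : 1 ≤ n - k - 1 := by omega
    have hrw : tterm n f k
        = C (f k * f (n - k) * (n.choose k : ℝ) * Bcoef n k) *
            (ascPochhammer ℝ (k - 1) * ascPochhammer ℝ (n - k - 1))
          - C (f k * f (n - k) * (n.choose k : ℝ) * Acoef n k) *
            (X * (ascPochhammer ℝ (k - 1) * ascPochhammer ℝ (n - k - 1))) := by
      simp only [tterm, map_mul]; ring
    rw [hrw, Polynomial.coeff_sub, Polynomial.coeff_C_mul, Polynomial.coeff_C_mul,
      Polynomial.coeff_X_mul]
    have hQ2 : (ascPochhammer ℝ (k - 1) * ascPochhammer ℝ (n - k - 1)).coeff m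
        = ∑ i ∈ Finset.range (m + 1),
            (ascPochhammer ℝ (k - 1)).coeff i * (ascPochhammer ℝ (n - k - 1)).coeff (m - i) := by
      rw [Polynomial.coeff_mul, Finset.Nat.sum_antidiagonal_eq_sum_range_succ_mk]
    have hQ1 : (ascPochhammer ℝ (k - 1) * ascPochhammer ℝ (n - k - 1)).coeff (m + 1)
        = ∑ i ∈ Finset.range (m + 1),
            (ascPochhammer ℝ (k - 1)).coeff i * (ascPochhammer ℝ (n - k - 1)).coeff (m - i + 1) := by
      rw [Polynomial.coeff_mul, Finset.Nat.sum_antidiagonal_eq_sum_range_succ_mk,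
        Finset.sum_range_succ]
      have h0 : (ascPochhammer ℝ (n - k - 1)).coeff (m + 1 - (m + 1)) = 0 := by
        simp only [Nat.sub_self]
        rw [Polynomial.coeff_zero_eq_eval_zero, ascPochhammer_eval_zero, if_neg (by omega)]
      rw [h0, mul_zero, add_zero]
      refine Finset.sum_congr rfl fun i hi => ?_
      simp only [Finset.mem_range] at hi
      rw [show m + 1 - i = m - i + 1 by omega]
    rw [hQ1, hQ2]
    simp only [Stir, Finset.mul_sum]
    rw [← Finset.sum_sub_distrib]
    refine Finset.sum_congr rfl fun i _ => ?_
    ring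
end
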